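/- Let I be a proper monomial ideal of A with M(I) finite and with X_i ∉ I for every i, and suppose that any two distinct truly isolated vertices of the survival complex have disjoint supports (share no variables). Then I equals the ideal generated by { X_i^{a_i + 1} : a truly isolated, i ∈ supp(a) } together with { X_i·X_j : a, b distinct truly isolated, i ∈ supp(a), j ∈ supp(b) }; consequently A/I is the fibre product over k of the pure power rings k[X_i : i ∈ supp(a)]/(X_i^{a_i+1} : i ∈ supp(a)), one for each truly isolated vertex a. -/

import Mathlib

open MvPolynomial

/-- An ideal of `k[X_1,…,X_n]` is a *monomial ideal* if it is generated by a set
of monomials. -/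
def IsMonomialIdeal {k : Type*} [Field k] {n : ℕ}
    (I : Ideal (MvPolynomial (Fin n) k)) : Prop :=
  ∃ S : Set ((Fin n) →₀ ℕ),
    I = Ideal.span ((fun a => (monomial a (1 : k) : MvPolynomial (Fin n) k)) '' S)

/-- `M(I)`: the vertices of the survival complex of `A/I`. -/
def survivors {k : Type*} [Field k] {n : ℕ}
    (I : Ideal (MvPolynomial (Fin n) k)) : Set ((Fin n) →₀ ℕ) :=
  {a | a ≠ 0 ∧ monomial a (1 : k) ∉ I}

/-- The truly isolated vertices of the survival complex of `A/I`. -/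
def trulyIsolatedSet {k : Type*} [Field k] {n : ℕ}
    (I : Ideal (MvPolynomial (Fin n) k)) : Set ((Fin n) →₀ ℕ) :=
  {a ∈ survivors I | ∀ i : Fin n, X i * monomial a (1 : k) ∈ I}

/-- The pure powers `X_i^{a_i+1}` with `a` truly isolated and `i ∈ supp a`. -/
def purePowerGens {k : Type*} [Field k] {n : ℕ}
    (I : Ideal (MvPolynomial (Fin n) k)) : Set (MvPolynomial (Fin n) k) :=
  {f | ∃ a ∈ trulyIsolatedSet I, ∃ i : Fin n, 0 < a i ∧ f = X i ^ (a i + 1)}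

/-- The cross products `X_i·X_j` of variables appearing in distinct truly
isolated vertices. -/
def crossGens {k : Type*} [Field k] {n : ℕ}
    (I : Ideal (MvPolynomial (Fin n) k)) : Set (MvPolynomial (Fin n) k) :=
  {f | ∃ a ∈ trulyIsolatedSet I, ∃ b ∈ trulyIsolatedSet I, a ≠ b ∧
    ∃ i j : Fin n, 0 < a i ∧ 0 < b j ∧ f = X i * X j}

/-- The ideal `(X_i^{a_i+1} : i ∈ supp a) + (X_j : j ∉ supp a)`, so that
`A` modulo this ideal is the pure power ring `k[X_i : i ∈ supp a]/(X_i^{a_i+1})`. -/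
noncomputable def pureComponentIdeal (k : Type*) [Field k] {n : ℕ} (a : (Fin n) →₀ ℕ) :
    Ideal (MvPolynomial (Fin n) k) :=
  Ideal.span ({f | ∃ i : Fin n, 0 < a i ∧ f = X i ^ (a i + 1)} ∪
    {f | ∃ j : Fin n, a j = 0 ∧ f = X j})

/-- The homogeneous maximal ideal `(X_1,…,X_n)` of `A`. -/
noncomputable def maxIdeal (k : Type*) [Field k] (n : ℕ) : Ideal (MvPolynomial (Fin n) k) :=
  Ideal.span (Set.range (X : Fin n → MvPolynomial (Fin n) k))

namespace SurvAux

variable {k : Type*} [Field k] {n : ℕ}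

/-- exponent vectors of the pure power generators -/
def ppExps {k : Type*} [Field k] {n : ℕ} (I : Ideal (MvPolynomial (Fin n) k)) :
    Set ((Fin n) →₀ ℕ) :=
  {e | ∃ a ∈ trulyIsolatedSet I, ∃ i : Fin n, 0 < a i ∧ e = Finsupp.single i (a i + 1)}

/-- exponent vectors of the cross generators -/
def crExps {k : Type*} [Field k] {n : ℕ} (I : Ideal (MvPolynomial (Fin n) k)) :
    Set ((Fin n) →₀ ℕ) :=
  {e | ∃ a ∈ trulyIsolatedSet I, ∃ b ∈ trulyIsolatedSet I, a ≠ b ∧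
    ∃ i j : Fin n, 0 < a i ∧ 0 < b j ∧ e = Finsupp.single i 1 + Finsupp.single j 1}

lemma support_mono_one (c : (Fin n) →₀ ℕ) :
    (monomial c (1 : k)).support = {c} := by
  classical
  rw [support_monomial, if_neg one_ne_zero]

lemma mono_mem_span_iff {S : Set ((Fin n) →₀ ℕ)} (c : (Fin n) →₀ ℕ) :
    monomial c (1 : k) ∈
      Ideal.span ((fun a => (monomial a (1 : k) : MvPolynomial (Fin n) k)) '' S) ↔
      ∃ s ∈ S, s ≤ c := by
  rw [mem_ideal_span_monomial_image]
  constructor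
  · intro h; exact h c (by rw [support_mono_one]; exact Finset.mem_singleton_self c)
  · intro h m hm
    rw [support_mono_one, Finset.mem_singleton] at hm
    subst hm; exact h

lemma mono_dvd_mem {I : Ideal (MvPolynomial (Fin n) k)} {e c : (Fin n) →₀ ℕ}
    (he : monomial e (1 : k) ∈ I) (hle : e ≤ c) : monomial c (1 : k) ∈ I := by
  have : monomial c (1 : k) = monomial e (1 : k) * monomial (c - e) (1 : k) := by
    rw [monomial_mul, one_mul, add_tsub_cancel_of_le hle]
  rw [this]
  exact I.mul_mem_right _ he

lemma X_eq (i : Fin n) : (X i : MvPolynomial (Fin n) k) = monomial (Finsupp.single i 1) 1 :=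
  rfl

/-- the push-up lemma: every monomial not in I lies below a truly isolated vertex -/
lemma exists_isolated_ge {I : Ideal (MvPolynomial (Fin n) k)} (hn : 1 ≤ n)
    (hfin : (survivors I).Finite) (hX : ∀ i : Fin n, (X i : MvPolynomial (Fin n) k) ∉ I)
    (c : (Fin n) →₀ ℕ) (hc : monomial c (1 : k) ∉ I) :
    ∃ a ∈ trulyIsolatedSet I, c ≤ a := by
  classical
  set T : Set ((Fin n) →₀ ℕ) := {d | c ≤ d ∧ monomial d (1 : k) ∉ I} with hT
  have hTfin : T.Finite := by
    apply (hfin.union (Set.finite_singleton 0)).subset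
    intro d hd
    by_cases h0 : d = 0
    · exact Or.inr (by simp [h0])
    · exact Or.inl ⟨h0, hd.2⟩
  have hTne : T.Nonempty := ⟨c, le_rfl, hc⟩
  obtain ⟨d, hdT, hdmax⟩ : ∃ d ∈ T, ∀ d' ∈ T, (d.sum fun _ v => v) ≤ (d'.sum fun _ v => v) →
      (d.sum fun _ v => v) = (d'.sum fun _ v => v) := by
    obtain ⟨d, hdT, h⟩ := Set.exists_max_image T (fun d => d.sum fun _ v => v) hTfin hTne
    exact ⟨d, hdT, fun d' hd' hle => le_antisymm hle (h d' hd')⟩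
  have hsum : ∀ (i : Fin n) (d : (Fin n) →₀ ℕ),
      ((Finsupp.single i 1 + d).sum fun _ v => v) = 1 + d.sum fun _ v => v := by
    intro i d
    rw [Finsupp.sum_add_index' (fun _ => rfl) (fun _ _ _ => rfl),
      Finsupp.sum_single_index rfl]
  have hd0 : d ≠ 0 := by
    intro h0
    have hc0 : c = 0 := le_antisymm (h0 ▸ hdT.1) bot_le
    have hi : (Finsupp.single (⟨0, hn⟩ : Fin n) 1) ∈ T := by
      constructor
      · rw [hc0]; exact bot_le
      · rw [← X_eq]; exact hX _
    have := hdmax _ hi (by simp [h0, Finsupp.sum_single_index])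
    simp [h0, Finsupp.sum_single_index] at this
  have hstep : ∀ i : Fin n, X i * monomial d (1 : k) ∈ I := by
    intro i
    by_contra hmem
    have h' : monomial (Finsupp.single i 1 + d) (1 : k) ∉ I := by
      rwa [X_eq, monomial_mul, one_mul] at hmem
    have hTi : (Finsupp.single i 1 + d) ∈ T :=
      ⟨le_trans hdT.1 (le_add_self), h'⟩
    have := hdmax _ hTi (by rw [hsum]; omega)
    rw [hsum] at this; omega
  exact ⟨d, ⟨⟨hd0, hdT.2⟩, hstep⟩, hdT.1⟩


section Main
variable {I : Ideal (MvPolynomial (Fin n) k)} (hn : 1 ≤ n)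
  (hproper : I ≠ ⊤) (hfin : (survivors I).Finite)
  (hX : ∀ i : Fin n, (X i : MvPolynomial (Fin n) k) ∉ I)
  (hdisj : ∀ a ∈ trulyIsolatedSet I, ∀ b ∈ trulyIsolatedSet I, a ≠ b →
      ∀ i : Fin n, ¬ (0 < a i ∧ 0 < b i))

include hdisj in
lemma share_eq {a b : (Fin n) →₀ ℕ} (ha : a ∈ trulyIsolatedSet I)
    (hb : b ∈ trulyIsolatedSet I) {i : Fin n} (hai : 0 < a i) (hbi : 0 < b i) : a = b := by
  by_contra hne
  exact hdisj a ha b hb hne i ⟨hai, hbi⟩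

include hn hfin hX in
lemma exists_isolated_var (i : Fin n) : ∃ a ∈ trulyIsolatedSet I, 0 < a i := by
  obtain ⟨a, ha, hle⟩ := SurvAux.exists_isolated_ge hn hfin hX (Finsupp.single i 1)
    (by rw [← SurvAux.X_eq]; exact hX i)
  exact ⟨a, ha, lt_of_lt_of_le one_pos (Finsupp.single_le_iff.mp hle)⟩

include hn hfin hX hdisj in
lemma pp_mem {a : (Fin n) →₀ ℕ} (ha : a ∈ trulyIsolatedSet I) {i : Fin n} (hai : 0 < a i) :
    monomial (Finsupp.single i (a i + 1)) (1 : k) ∈ I := by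
  by_contra h
  obtain ⟨b, hb, hle⟩ := SurvAux.exists_isolated_ge hn hfin hX _ h
  have hbi : a i + 1 ≤ b i := Finsupp.single_le_iff.mp hle
  have hab : a = b := share_eq hdisj ha hb hai (lt_of_lt_of_le (Nat.succ_pos _) hbi)
  exact Nat.not_succ_le_self (b i) (hab ▸ hbi)

include hn hfin hX hdisj in
lemma cr_mem {a b : (Fin n) →₀ ℕ} (ha : a ∈ trulyIsolatedSet I) (hb : b ∈ trulyIsolatedSet I)
    (hab : a ≠ b) {i j : Fin n} (hai : 0 < a i) (hbj : 0 < b j) :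
    monomial (Finsupp.single i 1 + Finsupp.single j 1) (1 : k) ∈ I := by
  by_contra h
  obtain ⟨d, hd, hle⟩ := SurvAux.exists_isolated_ge hn hfin hX _ h
  have hdi : 0 < d i := lt_of_lt_of_le one_pos
    (Finsupp.single_le_iff.mp (le_trans le_self_add hle))
  have hdj : 0 < d j := lt_of_lt_of_le one_pos
    (Finsupp.single_le_iff.mp (le_trans le_add_self hle))
  exact hab ((share_eq hdisj ha hd hai hdi).trans (share_eq hdisj hd hb hdj hbj))

include hn hfin hX hdisj in
/-- the combinatorial core: a monomial divisible by no generator lies below an isolated vertex -/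
lemma core {s : (Fin n) →₀ ℕ} (hs : s ≠ 0)
    (hnp : ¬ ∃ e ∈ SurvAux.ppExps I, e ≤ s) (hnc : ¬ ∃ e ∈ SurvAux.crExps I, e ≤ s) :
    ∃ a ∈ trulyIsolatedSet I, s ≤ a := by
  push_neg at hnp hnc
  obtain ⟨i0, hi0⟩ := Finsupp.ne_iff.mp hs
  simp only [Finsupp.coe_zero, Pi.zero_apply] at hi0
  have hi0' : 0 < s i0 := Nat.pos_of_ne_zero hi0
  obtain ⟨a, ha, hai0⟩ := exists_isolated_var hn hfin hX i0
  refine ⟨a, ha, Finsupp.le_def.mpr fun j => ?_⟩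
  by_cases hsj : s j = 0
  · omega
  have hsj' : 0 < s j := Nat.pos_of_ne_zero hsj
  obtain ⟨b, hb, hbj⟩ := exists_isolated_var hn hfin hX j
  by_cases hba : b = a
  · subst hba
    by_contra hgt
    refine hnp (Finsupp.single j (b j + 1)) ⟨b, hb, j, hbj, rfl⟩ ?_
    rw [Finsupp.single_le_iff]; omega
  · have hij : i0 ≠ j := by
      intro h; subst h
      exact hba (share_eq hdisj hb ha hbj hai0)
    exfalso
    apply hnc (Finsupp.single i0 1 + Finsupp.single j 1)
      ⟨a, ha, b, hb, fun h' => hba h'.symm, i0, j, hai0, hbj, rfl⟩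
    rw [Finsupp.le_def]
    intro l
    rw [Finsupp.add_apply, Finsupp.single_apply, Finsupp.single_apply]
    by_cases h1 : i0 = l
    · subst h1
      by_cases h2 : j = i0
      · exact absurd h2.symm hij
      · simp [h2]; omega
    · by_cases h2 : j = l
      · subst h2
        simp [h1]; omega
      · simp only [if_neg h1, if_neg h2]; omega
include hn hproper hfin hX hdisj in
lemma exists_gen_le {s : (Fin n) →₀ ℕ} (hs : monomial s (1 : k) ∈ I) :
    ∃ e ∈ SurvAux.ppExps I ∪ SurvAux.crExps I, e ≤ s := by
  by_contra h
  push_neg at h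
  by_cases hs0 : s = 0
  · subst hs0
    rw [monomial_zero', C_1] at hs
    exact hproper (I.eq_top_iff_one.mpr hs)
  · obtain ⟨a, ha, hle⟩ := core hn hfin hX hdisj hs0
      (fun ⟨e, he, hee⟩ => h e (Or.inl he) hee)
      (fun ⟨e, he, hee⟩ => h e (Or.inr he) hee)
    exact ha.1.2 (SurvAux.mono_dvd_mem hs hle)

include hn hfin hX hdisj in
lemma gen_mem {e : (Fin n) →₀ ℕ} (he : e ∈ SurvAux.ppExps I ∪ SurvAux.crExps I) :
    monomial e (1 : k) ∈ I := by
  rcases he with ⟨a, ha, i, hai, rfl⟩ | ⟨a, ha, b, hb, hab, i, j, hai, hbj, rfl⟩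
  · exact pp_mem hn hfin hX hdisj ha hai
  · exact cr_mem hn hfin hX hdisj ha hb hab hai hbj

lemma gens_eq (I : Ideal (MvPolynomial (Fin n) k)) :
    purePowerGens I ∪ crossGens I =
      (fun e => (monomial e (1 : k) : MvPolynomial (Fin n) k)) ''
        (SurvAux.ppExps I ∪ SurvAux.crExps I) := by
  rw [Set.image_union]
  congr 1
  · ext f
    constructor
    · rintro ⟨a, ha, i, hai, rfl⟩
      exact ⟨Finsupp.single i (a i + 1), ⟨a, ha, i, hai, rfl⟩, (X_pow_eq_monomial).symm⟩
    · rintro ⟨e, ⟨a, ha, i, hai, rfl⟩, rfl⟩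
      exact ⟨a, ha, i, hai, (X_pow_eq_monomial).symm⟩
  · ext f
    constructor
    · rintro ⟨a, ha, b, hb, hab, i, j, hai, hbj, rfl⟩
      refine ⟨Finsupp.single i 1 + Finsupp.single j 1,
        ⟨a, ha, b, hb, hab, i, j, hai, hbj, rfl⟩, ?_⟩
      rw [SurvAux.X_eq, SurvAux.X_eq, monomial_mul, one_mul]
    · rintro ⟨e, ⟨a, ha, b, hb, hab, i, j, hai, hbj, rfl⟩, rfl⟩
      refine ⟨a, ha, b, hb, hab, i, j, hai, hbj, ?_⟩
      rw [SurvAux.X_eq, SurvAux.X_eq, monomial_mul, one_mul]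

include hn hproper hfin hX hdisj in
lemma I_eq (hI : IsMonomialIdeal I) :
    I = Ideal.span (purePowerGens I ∪ crossGens I) := by
  rw [gens_eq]
  apply le_antisymm
  · obtain ⟨S, hS⟩ := hI
    conv_lhs => rw [hS]
    rw [Ideal.span_le]
    rintro f ⟨s, hs, rfl⟩
    have hsI : monomial s (1 : k) ∈ I := hS ▸ Ideal.subset_span ⟨s, hs, rfl⟩
    rw [SetLike.mem_coe, SurvAux.mono_mem_span_iff]
    exact exists_gen_le hn hproper hfin hX hdisj hsI
  · rw [Ideal.span_le]
    rintro f ⟨e, he, rfl⟩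
    exact gen_mem hn hfin hX hdisj he

end Main

/-- exponents of the generators of `pureComponentIdeal` -/
def cExps (a : (Fin n) →₀ ℕ) : Set ((Fin n) →₀ ℕ) :=
  {e | ∃ i : Fin n, 0 < a i ∧ e = Finsupp.single i (a i + 1)} ∪
    {e | ∃ j : Fin n, a j = 0 ∧ e = Finsupp.single j 1}

lemma pure_eq (a : (Fin n) →₀ ℕ) :
    pureComponentIdeal k a =
      Ideal.span ((fun e => (monomial e (1 : k) : MvPolynomial (Fin n) k)) '' cExps a) := by
  unfold pureComponentIdeal cExps
  congr 1
  rw [Set.image_union]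
  congr 1
  · ext f
    constructor
    · rintro ⟨i, hi, rfl⟩
      exact ⟨Finsupp.single i (a i + 1), ⟨i, hi, rfl⟩, (X_pow_eq_monomial).symm⟩
    · rintro ⟨e, ⟨i, hi, rfl⟩, rfl⟩
      exact ⟨i, hi, (X_pow_eq_monomial).symm⟩
  · ext f
    constructor
    · rintro ⟨j, hj, rfl⟩
      exact ⟨Finsupp.single j 1, ⟨j, hj, rfl⟩, rfl⟩
    · rintro ⟨e, ⟨j, hj, rfl⟩, rfl⟩
      exact ⟨j, hj, rfl⟩

lemma mem_pure_iff (a : (Fin n) →₀ ℕ) (f : MvPolynomial (Fin n) k) :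
    f ∈ pureComponentIdeal k a ↔ ∀ m ∈ f.support, ∃ e ∈ cExps a, e ≤ m := by
  rw [pure_eq, mem_ideal_span_monomial_image]

lemma cExps_le {a c : (Fin n) →₀ ℕ} {i : Fin n} (h : a i < c i) :
    ∃ e ∈ cExps a, e ≤ c := by
  by_cases hai : a i = 0
  · exact ⟨Finsupp.single i 1, Or.inr ⟨i, hai, rfl⟩, Finsupp.single_le_iff.mpr (by omega)⟩
  · exact ⟨Finsupp.single i (a i + 1), Or.inl ⟨i, Nat.pos_of_ne_zero hai, rfl⟩,
      Finsupp.single_le_iff.mpr (by omega)⟩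

lemma mem_max_iff (f : MvPolynomial (Fin n) k) :
    f ∈ maxIdeal k n ↔ ∀ m ∈ f.support, ∃ i : Fin n, m i ≠ 0 := by
  unfold maxIdeal
  rw [← Set.image_univ, mem_ideal_span_X_image]
  simp

lemma pure_le_max (a : (Fin n) →₀ ℕ) : pureComponentIdeal k a ≤ maxIdeal k n := by
  unfold pureComponentIdeal
  rw [Ideal.span_le]
  have hXmem : ∀ i : Fin n, (X i : MvPolynomial (Fin n) k) ∈ maxIdeal k n :=
    fun i => Ideal.subset_span (Set.mem_range_self i)
  rintro f (⟨i, hi, rfl⟩ | ⟨j, hj, rfl⟩)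
  · exact Ideal.pow_mem_of_mem _ (hXmem i) _ (Nat.succ_pos _)
  · exact hXmem j

lemma mono_mem_pure {a m : (Fin n) →₀ ℕ} (c : k) (h : ∃ e ∈ cExps a, e ≤ m) :
    monomial m c ∈ pureComponentIdeal k a := by
  rw [mem_pure_iff]
  intro m' hm'
  have hms := support_monomial_subset hm'
  rw [Finset.mem_singleton] at hms
  subst hms; exact h

open scoped Classical in
/-- the truncation of a polynomial to the exponents `≤ a` -/
noncomputable def trunc (a : (Fin n) →₀ ℕ) (g : MvPolynomial (Fin n) k) :
    MvPolynomial (Fin n) k :=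
  ∑ m ∈ g.support, if m ≤ a then monomial m (coeff m g) else 0

open scoped Classical in
lemma sub_trunc_mem (a : (Fin n) →₀ ℕ) (g : MvPolynomial (Fin n) k) :
    g - trunc a g ∈ pureComponentIdeal k a := by
  have hg : g - trunc a g =
      ∑ m ∈ g.support, ((monomial m (coeff m g)) -
        (if m ≤ a then monomial m (coeff m g) else 0)) := by
    rw [Finset.sum_sub_distrib, ← as_sum]; rfl
  rw [hg]
  apply Ideal.sum_mem
  intro m _
  split_ifs with h
  · simp
  · rw [sub_zero]
    apply mono_mem_pure
    rw [Finsupp.le_def] at h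
    push_neg at h
    obtain ⟨i, hi⟩ := h
    exact cExps_le hi

open scoped Classical in
lemma trunc_mem_of_ne {I : Ideal (MvPolynomial (Fin n) k)}
    (hdisj : ∀ a ∈ trulyIsolatedSet I, ∀ b ∈ trulyIsolatedSet I, a ≠ b →
      ∀ i : Fin n, ¬ (0 < a i ∧ 0 < b i))
    {a b : (Fin n) →₀ ℕ} (hb : b ∈ trulyIsolatedSet I) (ha : a ∈ trulyIsolatedSet I)
    (hab : b ≠ a) {g : MvPolynomial (Fin n) k} (h0 : coeff 0 g = 0) :
    trunc b g ∈ pureComponentIdeal k a := by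
  rw [trunc]
  apply Ideal.sum_mem
  intro m hm
  split_ifs with h
  · apply mono_mem_pure
    have hm0 : m ≠ 0 := fun h' => (mem_support_iff.mp hm) (h' ▸ h0)
    obtain ⟨i, hi⟩ := Finsupp.ne_iff.mp hm0
    simp only [Finsupp.coe_zero, Pi.zero_apply] at hi
    have hmi : 0 < m i := Nat.pos_of_ne_zero hi
    have hbi : 0 < b i := lt_of_lt_of_le hmi (Finsupp.le_def.mp h i)
    have hai : a i = 0 := by
      by_contra hne
      exact hab (share_eq hdisj hb ha hbi (Nat.pos_of_ne_zero hne))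
    exact ⟨Finsupp.single i 1, Or.inr ⟨i, hai, rfl⟩, Finsupp.single_le_iff.mpr (by omega)⟩
  · exact zero_mem _

lemma max_coeff {f : MvPolynomial (Fin n) k} (h : f ∈ maxIdeal k n) : coeff 0 f = 0 := by
  by_contra h0
  obtain ⟨i, hi⟩ := (mem_max_iff f).mp h 0 (mem_support_iff.mpr h0)
  simp at hi

section Main2
variable {I : Ideal (MvPolynomial (Fin n) k)} (hn : 1 ≤ n)
  (hproper : I ≠ ⊤) (hfin : (survivors I).Finite)
  (hX : ∀ i : Fin n, (X i : MvPolynomial (Fin n) k) ∉ I)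
  (hdisj : ∀ a ∈ trulyIsolatedSet I, ∀ b ∈ trulyIsolatedSet I, a ≠ b →
      ∀ i : Fin n, ¬ (0 < a i ∧ 0 < b i))

include hn hproper hfin hX hdisj in
lemma I_le_pure (hI : IsMonomialIdeal I) {a : (Fin n) →₀ ℕ} (ha : a ∈ trulyIsolatedSet I) :
    I ≤ pureComponentIdeal k a := by
  rw [I_eq hn hproper hfin hX hdisj hI, gens_eq, Ideal.span_le]
  rintro f ⟨e, he, rfl⟩
  rw [SetLike.mem_coe, pure_eq, SurvAux.mono_mem_span_iff]
  rcases he with ⟨a', ha', i, hai', rfl⟩ | ⟨a', ha', b', hb', hab', i, j, hai', hbj', rfl⟩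
  · by_cases haa : a' = a
    · subst haa
      exact ⟨_, Or.inl ⟨i, hai', rfl⟩, le_rfl⟩
    · have hai : a i = 0 := by
        by_contra hne
        exact haa (share_eq hdisj ha' ha hai' (Nat.pos_of_ne_zero hne))
      refine ⟨Finsupp.single i 1, Or.inr ⟨i, hai, rfl⟩, Finsupp.single_le_iff.mpr ?_⟩
      rw [Finsupp.single_eq_same]; omega
  · by_cases haa : a' = a
    · subst haa
      have haj : a' j = 0 := by
        by_contra hne
        exact hab' (share_eq hdisj ha' hb' (Nat.pos_of_ne_zero hne) hbj')
      exact ⟨Finsupp.single j 1, Or.inr ⟨j, haj, rfl⟩, le_add_self⟩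
    · have hai : a i = 0 := by
        by_contra hne
        exact haa (share_eq hdisj ha' ha hai' (Nat.pos_of_ne_zero hne))
      exact ⟨Finsupp.single i 1, Or.inr ⟨i, hai, rfl⟩, le_self_add⟩

include hn hfin hX hdisj in
lemma inj_core {m : (Fin n) →₀ ℕ}
    (hm : ∀ a ∈ trulyIsolatedSet I, ∃ e ∈ cExps a, e ≤ m) :
    ∃ e ∈ SurvAux.ppExps I ∪ SurvAux.crExps I, e ≤ m := by
  by_contra h
  push_neg at h
  by_cases hm0 : m = 0
  · subst hm0
    obtain ⟨a0, ha0, -⟩ := exists_isolated_var hn hfin hX ⟨0, hn⟩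
    obtain ⟨e, he, hle⟩ := hm a0 ha0
    have he0 : e = 0 := le_antisymm hle bot_le
    rcases he with ⟨i, hi, rfl⟩ | ⟨j, hj, rfl⟩
    · exact (Nat.succ_ne_zero _) (Finsupp.single_eq_zero.mp he0)
    · exact one_ne_zero (Finsupp.single_eq_zero.mp he0)
  · obtain ⟨a, ha, hle⟩ := core hn hfin hX hdisj hm0
      (fun ⟨e, he, hee⟩ => h e (Or.inl he) hee) (fun ⟨e, he, hee⟩ => h e (Or.inr he) hee)
    obtain ⟨e, he, hee⟩ := hm a ha
    rcases he with ⟨i, hi, rfl⟩ | ⟨j, hj, rfl⟩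
    · have h1 := Finsupp.single_le_iff.mp hee
      have h2 := Finsupp.le_def.mp hle i
      omega
    · have h1 := Finsupp.single_le_iff.mp hee
      have h2 := Finsupp.le_def.mp hle j
      omega

end Main2

end SurvAux

set_option maxHeartbeats 1000000 in
set_option synthInstance.maxHeartbeats 200000 in
/-- If the truly isolated vertices of the survival complex pairwise share no
variables, then `I` is generated by the pure powers `X_i^{a_i+1}` (for `a`
truly isolated, `i ∈ supp a`) together with the cross products of variables
from distinct truly isolated vertices; consequently `A/I` is the fibre product
over `k` of the pure power rings `k[X_i : i ∈ supp a]/(X_i^{a_i+1} : i ∈ supp a)`,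
one for each truly isolated vertex `a`. -/
theorem disjoint_truly_isolated_purePower_fibre_product
    {k : Type*} [Field k] {n : ℕ} (hn : 1 ≤ n)
    (I : Ideal (MvPolynomial (Fin n) k)) (hI : IsMonomialIdeal I)
    (hproper : I ≠ ⊤) (hfin : (survivors I).Finite)
    (hX : ∀ i : Fin n, (X i : MvPolynomial (Fin n) k) ∉ I)
    (hdisj : ∀ a ∈ trulyIsolatedSet I, ∀ b ∈ trulyIsolatedSet I, a ≠ b →
      ∀ i : Fin n, ¬ (0 < a i ∧ 0 < b i)) :
    I = Ideal.span (purePowerGens I ∪ crossGens I) ∧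
      ∃ φ : (MvPolynomial (Fin n) k ⧸ I) →+*
          (∀ a : trulyIsolatedSet I, MvPolynomial (Fin n) k ⧸ pureComponentIdeal k a.1),
        (∀ a : trulyIsolatedSet I,
          ((Pi.evalRingHom
              (fun a : trulyIsolatedSet I =>
                MvPolynomial (Fin n) k ⧸ pureComponentIdeal k a.1) a).comp φ).comp
            (Ideal.Quotient.mk I) = Ideal.Quotient.mk (pureComponentIdeal k a.1)) ∧
        Function.Injective φ ∧
        ∃ ε : ∀ a : trulyIsolatedSet I,
            (MvPolynomial (Fin n) k ⧸ pureComponentIdeal k a.1) →+*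
              (MvPolynomial (Fin n) k ⧸ maxIdeal k n),
          (∀ a : trulyIsolatedSet I,
            (ε a).comp (Ideal.Quotient.mk (pureComponentIdeal k a.1)) =
              Ideal.Quotient.mk (maxIdeal k n)) ∧
          Set.range φ =
            {r : ∀ a : trulyIsolatedSet I,
                MvPolynomial (Fin n) k ⧸ pureComponentIdeal k a.1 |
              ∀ a b : trulyIsolatedSet I, ε a (r a) = ε b (r b)} := by
  classical
  have hIeq := SurvAux.I_eq hn hproper hfin hX hdisj hI
  refine ⟨hIeq, ?_⟩
  have hle : ∀ a : trulyIsolatedSet I, I ≤ pureComponentIdeal k a.1 :=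
    fun a => SurvAux.I_le_pure hn hproper hfin hX hdisj hI a.2
  refine ⟨RingHom.pi (fun a : trulyIsolatedSet I =>
    Ideal.Quotient.factor (hle a)), ?_, ?_, ?_⟩
  · intro a
    apply RingHom.ext; intro x
    simp only [RingHom.coe_comp, Function.comp_apply, Pi.evalRingHom_apply,
      RingHom.pi_apply, Ideal.Quotient.factor_mk]
  · rw [injective_iff_map_eq_zero]
    intro x hx
    obtain ⟨f, rfl⟩ := Ideal.Quotient.mk_surjective x
    rw [Ideal.Quotient.eq_zero_iff_mem]
    have hf : ∀ a : trulyIsolatedSet I, f ∈ pureComponentIdeal k a.1 := by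
      intro a
      have h1 : Ideal.Quotient.factor (hle a)
          (Ideal.Quotient.mk I f) = 0 := congrFun hx a
      rw [Ideal.Quotient.factor_mk, Ideal.Quotient.eq_zero_iff_mem] at h1
      exact h1
    rw [hIeq, SurvAux.gens_eq, mem_ideal_span_monomial_image]
    intro m hm
    exact SurvAux.inj_core hn hfin hX hdisj
      (fun a ha => (SurvAux.mem_pure_iff a f).mp (hf ⟨a, ha⟩) m hm)
  · refine ⟨fun a => Ideal.Quotient.factor (SurvAux.pure_le_max a.1), ?_, ?_⟩
    · intro a
      apply RingHom.ext; intro x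
      simp only [RingHom.coe_comp, Function.comp_apply, Ideal.Quotient.factor_mk]
    · ext r
      constructor
      · rintro ⟨x, rfl⟩
        obtain ⟨f, rfl⟩ := Ideal.Quotient.mk_surjective x
        intro a b
        simp only [RingHom.pi_apply, Ideal.Quotient.factor_mk]
      · intro hr
        haveI : Fintype (trulyIsolatedSet I) :=
          (hfin.subset (fun a ha => ha.1)).fintype
        choose f hf using fun a : trulyIsolatedSet I =>
          Ideal.Quotient.mk_surjective (r a)
        obtain ⟨a0v, ha0v, -⟩ := SurvAux.exists_isolated_var hn hfin hX ⟨0, hn⟩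
        set a0 : trulyIsolatedSet I := ⟨a0v, ha0v⟩
        set lam : k := coeff 0 (f a0) with hlam
        have hcoeff : ∀ a : trulyIsolatedSet I, coeff 0 (f a) = lam := by
          intro a
          have h1 : Ideal.Quotient.mk (maxIdeal k n) (f a) =
              Ideal.Quotient.mk (maxIdeal k n) (f a0) := by
            have h2 := hr a a0
            rw [← hf a, ← hf a0] at h2
            simpa only [Ideal.Quotient.factor_mk] using h2
          have h3 : f a - f a0 ∈ maxIdeal k n := Ideal.Quotient.eq.mp h1
          have h4 := SurvAux.max_coeff h3
          rw [coeff_sub, sub_eq_zero] at h4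
          exact h4
        set g : trulyIsolatedSet I → MvPolynomial (Fin n) k :=
          fun a => f a - C lam with hg
        have hg0 : ∀ a, coeff 0 (g a) = 0 := by
          intro a
          simp [hg, coeff_sub, hcoeff a]
        set F : MvPolynomial (Fin n) k :=
          C lam + ∑ a : trulyIsolatedSet I, SurvAux.trunc a.1 (g a) with hF
        have key : ∀ a : trulyIsolatedSet I, F - f a ∈ pureComponentIdeal k a.1 := by
          intro a
          have hsplit : (∑ b : trulyIsolatedSet I, SurvAux.trunc b.1 (g b))
              = SurvAux.trunc a.1 (g a) +
                ∑ b ∈ Finset.univ.erase a, SurvAux.trunc b.1 (g b) :=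
            (Finset.add_sum_erase _ _ (Finset.mem_univ a)).symm
          have hFa : F - f a = (∑ b ∈ Finset.univ.erase a, SurvAux.trunc b.1 (g b)) -
              (g a - SurvAux.trunc a.1 (g a)) := by
            rw [hF, hsplit, hg]; ring
          rw [hFa]
          apply Submodule.sub_mem
          · apply Ideal.sum_mem
            intro b hb
            exact SurvAux.trunc_mem_of_ne hdisj b.2 a.2
              (fun h => Finset.ne_of_mem_erase hb (Subtype.ext h)) (hg0 b)
          · exact SurvAux.sub_trunc_mem a.1 (g a)
        refine ⟨Ideal.Quotient.mk I F, ?_⟩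
        funext a
        show Ideal.Quotient.factor (hle a)
          (Ideal.Quotient.mk I F) = r a
        rw [Ideal.Quotient.factor_mk, ← hf a]
        exact Ideal.Quotient.eq.mpr (key a)
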